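/- Let G = {G_1, ..., G_{2n}} be a collection of 2n bipartite graphs on the same bipartition V = (X, Y) with |X| = |Y| = n. If δ(G_i) ≥ ⌈n/2⌉ for each i ∈ [2n], then either (i) G contains a partial transversal isomorphic to a Hamiltonian path (a path on all 2n vertices whose 2n-1 edges receive distinct indices in [2n]); or (ii) n is even and G_1 = ... = G_{2n} = K_{n/2,n/2} ∪ K_{n/2,n/2}. -/

import Mathlib

open Finset

variable {V : Type*} [DecidableEq V]

/-- `v 0, …, v len` is a path whose `i`-th edge `v i – v (i+1)` lies in `G (φ i)`,
with pairwise distinct labels `φ i ∈ {1, …, s}`. -/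
def IsRainbowPath (G : ℕ → SimpleGraph V) (s len : ℕ) (v : ℕ → V) (φ : ℕ → ℕ) : Prop :=
  Set.InjOn v (Set.Iic len) ∧ Set.InjOn φ (Set.Iio len) ∧
  (∀ i < len, 1 ≤ φ i ∧ φ i ≤ s) ∧
  ∀ i < len, (G (φ i)).Adj (v i) (v (i + 1))

/-- a rainbow (partial transversal) cycle with `len` edges. -/
def IsRainbowCycle (G : ℕ → SimpleGraph V) (s len : ℕ) (v : ℕ → V) (φ : ℕ → ℕ) : Prop :=
  Set.InjOn v (Set.Iio len) ∧ v len = v 0 ∧ Set.InjOn φ (Set.Iio len) ∧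
  (∀ i < len, 1 ≤ φ i ∧ φ i ≤ s) ∧
  ∀ i < len, (G (φ i)).Adj (v i) (v (i + 1))

/-- the collection `G 1, …, G s` has a (partial) transversal Hamiltonian path
on the `2n` vertices. -/
def HasRainbowHamPath (G : ℕ → SimpleGraph V) (s n : ℕ) : Prop :=
  ∃ v : ℕ → V, ∃ φ : ℕ → ℕ,
    IsRainbowPath G s (2 * n - 1) v φ ∧ ∀ w : V, ∃ i ≤ 2 * n - 1, v i = w

/-- a transversal Hamiltonian path with endpoints `x` and `y`. -/
def HasRainbowHamPathBetween (G : ℕ → SimpleGraph V) (s n : ℕ) (x y : V) : Prop :=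
  ∃ v : ℕ → V, ∃ φ : ℕ → ℕ,
    IsRainbowPath G s (2 * n - 1) v φ ∧ v 0 = x ∧ v (2 * n - 1) = y ∧
    ∀ w : V, ∃ i ≤ 2 * n - 1, v i = w

/-- every `G i`, `1 ≤ i ≤ s`, equals `K_{n/2,n/2} ∪ K_{n/2,n/2}` with respect to a common
partition `X = X1 ∪ X2`, `Y = Y1 ∪ Y2`. -/
def AllTwoCompleteBip (G : ℕ → SimpleGraph V) (s n : ℕ) (X Y : Finset V) : Prop :=
  ∃ X1 X2 Y1 Y2 : Finset V,
    Disjoint X1 X2 ∧ Disjoint Y1 Y2 ∧ X1 ∪ X2 = X ∧ Y1 ∪ Y2 = Y ∧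
    X1.card = n / 2 ∧ X2.card = n / 2 ∧ Y1.card = n / 2 ∧ Y2.card = n / 2 ∧
    ∀ i, 1 ≤ i → i ≤ s → ∀ a b : V,
      (G i).Adj a b ↔ ((a ∈ X1 ∧ b ∈ Y1) ∨ (b ∈ X1 ∧ a ∈ Y1) ∨
                       (a ∈ X2 ∧ b ∈ Y2) ∨ (b ∈ X2 ∧ a ∈ Y2))

/-- the adjacency relation of the graph `F`: all edges from `xs` to `Y1 ∪ Y2`,
all edges from `ys` to `X1 ∪ X2`, and all edges between `Xj` and `Yj`, `j = 1, 2`. -/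
def FAdj (xs ys : V) (X1 X2 Y1 Y2 : Finset V) (a b : V) : Prop :=
  (a = xs ∧ b ∈ Y1 ∪ Y2) ∨ (b = xs ∧ a ∈ Y1 ∪ Y2) ∨
  (a = ys ∧ b ∈ X1 ∪ X2) ∨ (b = ys ∧ a ∈ X1 ∪ X2) ∨
  (a ∈ X1 ∧ b ∈ Y1) ∨ (b ∈ X1 ∧ a ∈ Y1) ∨
  (a ∈ X2 ∧ b ∈ Y2) ∨ (b ∈ X2 ∧ a ∈ Y2)

/-- `G0` is one of the exceptional graphs `F`, `F'` on the bipartition `(X, Y)`. -/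
def IsFOrF' (G0 : SimpleGraph V) (X Y : Finset V) (n : ℕ) : Prop :=
  ∃ xs ys : V, ∃ X1 X2 Y1 Y2 : Finset V,
    xs ∈ X ∧ ys ∈ Y ∧ Disjoint X1 X2 ∧ Disjoint Y1 Y2 ∧
    xs ∉ X1 ∪ X2 ∧ ys ∉ Y1 ∪ Y2 ∧
    insert xs (X1 ∪ X2) = X ∧ insert ys (Y1 ∪ Y2) = Y ∧
    X1.card = (n - 1) / 2 ∧ X2.card = (n - 1) / 2 ∧
    Y1.card = (n - 1) / 2 ∧ Y2.card = (n - 1) / 2 ∧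
    ((∀ a b : V, G0.Adj a b ↔ FAdj xs ys X1 X2 Y1 Y2 a b) ∨
     (∀ a b : V, G0.Adj a b ↔
        (FAdj xs ys X1 X2 Y1 Y2 a b ∨ (a = xs ∧ b = ys) ∨ (a = ys ∧ b = xs))))

/-- in-degree of `w` in the auxiliary digraph `D`: the number of odd `i ∈ [1, 2n-3]`
with `u i w ∈ E(G i)` and `w ≠ u (i+1)`. -/
noncomputable def inDegD (G : ℕ → SimpleGraph V) (n : ℕ) (u : ℕ → V) (w : V) : ℕ :=
  {i : ℕ | Odd i ∧ 1 ≤ i ∧ i ≤ 2 * n - 3 ∧ (G i).Adj (u i) w ∧ w ≠ u (i + 1)}.ncard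



set_option linter.unusedSectionVars false

section Lemmas

variable {G : ℕ → SimpleGraph V} {s : ℕ}

lemma card_even_odd_range (m : ℕ) :
    ((range m).filter (fun i => Even i)).card = (m+1)/2 ∧
    ((range m).filter (fun i => ¬ Even i)).card = m/2 := by
  induction m with
  | zero => simp
  | succ m ih =>
    rw [Finset.range_add_one, Finset.filter_insert, Finset.filter_insert]
    by_cases h : Even m
    · rw [if_pos h, if_neg (by simpa using h)]
      rw [Finset.card_insert_of_notMem (by simp)]
      obtain ⟨t, rfl⟩ := h
      omega
    · rw [if_neg h, if_pos h]
      rw [Finset.card_insert_of_notMem (by simp)]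
      have h' : m % 2 = 1 := Nat.odd_iff.mp (Nat.not_even_iff_odd.mp h)
      omega

lemma rp_mono {len m : ℕ} {v : ℕ → V} {φ : ℕ → ℕ}
    (h : IsRainbowPath G s len v φ) (hm : m ≤ len) : IsRainbowPath G s m v φ := by
  obtain ⟨h1, h2, h3, h4⟩ := h
  exact ⟨h1.mono (Set.Iic_subset_Iic.2 hm), h2.mono (Set.Iio_subset_Iio hm),
    fun i hi => h3 i (lt_of_lt_of_le hi hm), fun i hi => h4 i (lt_of_lt_of_le hi hm)⟩

lemma rp_labels_le (h : IsRainbowPath G s len v φ) : len ≤ s := by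
  obtain ⟨-, h2, h3, -⟩ := h
  have hsub : (range len).image φ ⊆ Finset.Icc 1 s := by
    intro c hc
    simp only [Finset.mem_image, Finset.mem_range] at hc
    obtain ⟨i, hi, rfl⟩ := hc
    exact Finset.mem_Icc.mpr (h3 i hi)
  have hcard : ((range len).image φ).card = len := by
    rw [Finset.card_image_of_injOn (by simpa using h2), Finset.card_range]
  have := Finset.card_le_card hsub
  simpa [hcard, Nat.card_Icc] using this

lemma rp_reverse {len : ℕ} {v : ℕ → V} {φ : ℕ → ℕ} (h : IsRainbowPath G s len v φ) :
    IsRainbowPath G s len (fun i => v (len - i)) (fun i => φ (len - 1 - i)) := by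
  obtain ⟨h1, h2, h3, h4⟩ := h
  refine ⟨?_, ?_, ?_, ?_⟩
  · intro i hi j hj hij
    simp only [Set.mem_Iic] at hi hj
    have := h1 (show len - i ∈ Set.Iic len by simp [Set.mem_Iic])
      (show len - j ∈ Set.Iic len by simp [Set.mem_Iic]) hij
    omega
  · intro i hi j hj hij
    simp only [Set.mem_Iio] at hi hj
    have := h2 (show len - 1 - i ∈ Set.Iio len by simp [Set.mem_Iio]; omega)
      (show len - 1 - j ∈ Set.Iio len by simp [Set.mem_Iio]; omega) hij
    omega
  · intro i hi
    exact h3 _ (by omega)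
  · intro i hi
    have h5 := h4 (len - 1 - i) (by omega)
    have e1 : len - 1 - i + 1 = len - i := by omega
    have e2 : len - (i+1) = len - 1 - i := by omega
    rw [e1] at h5
    show (G (φ (len - 1 - i))).Adj (v (len - i)) (v (len - (i+1)))
    rw [e2]
    exact h5.symm

lemma rp_extend {len : ℕ} {v : ℕ → V} {φ : ℕ → ℕ} {c : ℕ} {u : V}
    (h : IsRainbowPath G s len v φ) (hc1 : 1 ≤ c) (hc2 : c ≤ s)
    (hfresh : ∀ i < len, φ i ≠ c) (hu : ∀ i ≤ len, v i ≠ u)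
    (hadj : (G c).Adj (v len) u) :
    IsRainbowPath G s (len + 1) (fun i => if i = len + 1 then u else v i)
      (fun i => if i = len then c else φ i) := by
  obtain ⟨h1, h2, h3, h4⟩ := h
  refine ⟨?_, ?_, ?_, ?_⟩
  · intro i hi j hj hij
    simp only [Set.mem_Iic] at hi hj
    by_cases hi' : i = len + 1 <;> by_cases hj' : j = len + 1
    · omega
    · simp only [if_pos hi', if_neg hj'] at hij
      exact absurd hij.symm (hu j (by omega))
    · simp only [if_neg hi', if_pos hj'] at hij
      exact absurd hij (hu i (by omega))
    · simp only [if_neg hi', if_neg hj'] at hij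
      exact h1 (show i ∈ Set.Iic len by simp [Set.mem_Iic]; omega)
        (show j ∈ Set.Iic len by simp [Set.mem_Iic]; omega) hij
  · intro i hi j hj hij
    simp only [Set.mem_Iio] at hi hj
    by_cases hi' : i = len <;> by_cases hj' : j = len
    · omega
    · simp only [if_pos hi', if_neg hj'] at hij
      exact absurd hij.symm (hfresh j (by omega))
    · simp only [if_neg hi', if_pos hj'] at hij
      exact absurd hij (hfresh i (by omega))
    · simp only [if_neg hi', if_neg hj'] at hij
      exact h2 (show i ∈ Set.Iio len by simp [Set.mem_Iio]; omega)
        (show j ∈ Set.Iio len by simp [Set.mem_Iio]; omega) hij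
  · intro i hi
    by_cases hi' : i = len
    · simp [hi', hc1, hc2]
    · simp only [if_neg hi']
      exact h3 i (by omega)
  · intro i hi
    by_cases hi' : i = len
    · subst hi'
      simp only [if_pos rfl, if_neg (show ¬ (i : ℕ) = i + 1 by omega)]
      simpa using hadj
    · have hil : i < len := by omega
      simp only [if_neg hi', if_neg (show ¬ i = len + 1 by omega),
        if_neg (show ¬ i + 1 = len + 1 by omega)]
      simpa using h4 i hil


lemma rp_close {len : ℕ} {v : ℕ → V} {φ : ℕ → ℕ} {c : ℕ}
    (h : IsRainbowPath G s len v φ) (hc1 : 1 ≤ c) (hc2 : c ≤ s)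
    (hfresh : ∀ i < len, φ i ≠ c) (hadj : (G c).Adj (v len) (v 0)) :
    IsRainbowCycle G s (len + 1) (fun i => if i = len + 1 then v 0 else v i)
      (fun i => if i = len then c else φ i) := by
  obtain ⟨h1, h2, h3, h4⟩ := h
  refine ⟨?_, ?_, ?_, ?_, ?_⟩
  · intro i hi j hj hij
    simp only [Set.mem_Iio] at hi hj
    simp only [if_neg (show ¬ i = len + 1 by omega),
      if_neg (show ¬ j = len + 1 by omega)] at hij
    exact h1 (show i ∈ Set.Iic len by simp [Set.mem_Iic]; omega)
      (show j ∈ Set.Iic len by simp [Set.mem_Iic]; omega) hij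
  · simp
  · intro i hi j hj hij
    simp only [Set.mem_Iio] at hi hj
    by_cases hi' : i = len <;> by_cases hj' : j = len
    · omega
    · simp only [if_pos hi', if_neg hj'] at hij
      exact absurd hij.symm (hfresh j (by omega))
    · simp only [if_neg hi', if_pos hj'] at hij
      exact absurd hij (hfresh i (by omega))
    · simp only [if_neg hi', if_neg hj'] at hij
      exact h2 (show i ∈ Set.Iio len by simp [Set.mem_Iio]; omega)
        (show j ∈ Set.Iio len by simp [Set.mem_Iio]; omega) hij
  · intro i hi
    by_cases hi' : i = len
    · simp [hi', hc1, hc2]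
    · simp only [if_neg hi']
      exact h3 i (by omega)
  · intro i hi
    by_cases hi' : i = len
    · subst hi'
      simp only [if_pos rfl, if_neg (show ¬ (i : ℕ) = i + 1 by omega)]
      simpa using hadj
    · have hil : i < len := by omega
      simp only [if_neg hi', if_neg (show ¬ i = len + 1 by omega),
        if_neg (show ¬ i + 1 = len + 1 by omega)]
      simpa using h4 i hil

lemma rc_break {m : ℕ} {v : ℕ → V} {φ : ℕ → ℕ}
    (h : IsRainbowCycle G s m v φ) {r : ℕ} (hr : r < m) :
    IsRainbowPath G s (m - 1) (fun i => v ((r + i) % m)) (fun i => φ ((r + i) % m)) := by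
  obtain ⟨h1, h2, h3, h4, h5⟩ := h
  have hm : 1 ≤ m := by omega
  have key : ∀ i j : ℕ, i < m → j < m → (r + i) % m = (r + j) % m → i = j := by
    intro i j hi hj hij
    have h' : i ≡ j [MOD m] := Nat.ModEq.add_left_cancel' r hij
    have : i % m = j % m := h'
    rw [Nat.mod_eq_of_lt hi, Nat.mod_eq_of_lt hj] at this
    exact this
  refine ⟨?_, ?_, ?_, ?_⟩
  · intro i hi j hj hij
    simp only [Set.mem_Iic] at hi hj
    have e1 : (r + i) % m < m := Nat.mod_lt _ hm
    have e2 : (r + j) % m < m := Nat.mod_lt _ hm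
    have := h1 (show (r+i) % m ∈ Set.Iio m by simpa using e1)
      (show (r+j) % m ∈ Set.Iio m by simpa using e2) hij
    exact key i j (by omega) (by omega) this
  · intro i hi j hj hij
    simp only [Set.mem_Iio] at hi hj
    have e1 : (r + i) % m < m := Nat.mod_lt _ hm
    have e2 : (r + j) % m < m := Nat.mod_lt _ hm
    have := h3 (show (r+i) % m ∈ Set.Iio m by simpa using e1)
      (show (r+j) % m ∈ Set.Iio m by simpa using e2) hij
    exact key i j (by omega) (by omega) this
  · intro i hi
    exact h4 _ (Nat.mod_lt _ hm)
  · intro i hi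
    have e1 : (r + i) % m < m := Nat.mod_lt _ hm
    have step := h5 _ e1
    have e3 : (r + i + 1) % m = ((r + i) % m + 1) % m := by
      rw [Nat.add_mod (r+i) 1 m, Nat.add_mod ((r+i) % m) 1 m,
        Nat.mod_mod_of_dvd _ (dvd_refl m)]
    show (G (φ ((r + i) % m))).Adj (v ((r + i) % m)) (v ((r + (i+1)) % m))
    rw [show r + (i+1) = r + i + 1 by omega, e3]
    by_cases hlast : (r + i) % m + 1 = m
    · rw [hlast, Nat.mod_self, ← h2]
      rw [hlast] at step
      exact step
    · rw [Nat.mod_eq_of_lt (show (r + i) % m + 1 < m by omega)]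
      exact step

lemma rp_rotate {k : ℕ} {v : ℕ → V} {φ : ℕ → ℕ} {c j : ℕ}
    (h : IsRainbowPath G s k v φ) (hj : j + 2 ≤ k)
    (hc1 : 1 ≤ c) (hc2 : c ≤ s) (hfresh : ∀ i < k, φ i ≠ c)
    (hadj : (G c).Adj (v k) (v j)) :
    ∃ (v' : ℕ → V) (φ' : ℕ → ℕ),
      IsRainbowPath G s k v' φ' ∧ v' 0 = v 0 ∧ v' k = v (j + 1) ∧
      (∀ b : V, (∃ i ≤ k, v' i = b) ↔ (∃ i ≤ k, v i = b)) ∧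
      (∀ i < k, φ' i = c ∨ ∃ t < k, φ' i = φ t) := by
  obtain ⟨h1, h2, h3, h4⟩ := h
  set σ : ℕ → ℕ := fun i => if i ≤ j then i else k + j + 1 - i with hσ
  have hσmap : ∀ i ≤ k, σ i ≤ k := by
    intro i hi
    simp only [hσ]
    split <;> omega
  have hσinj : ∀ i ≤ k, ∀ i' ≤ k, σ i = σ i' → i = i' := by
    intro i hi i' hi' hii
    simp only [hσ] at hii
    split at hii <;> split at hii <;> omega
  have hσsurj : ∀ t ≤ k, ∃ i ≤ k, σ i = t := by
    intro t ht
    by_cases h' : t ≤ j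
    · exact ⟨t, ht, by simp [hσ, h']⟩
    · refine ⟨k + j + 1 - t, by omega, ?_⟩
      simp only [hσ]
      rw [if_neg (by omega)]
      omega
  refine ⟨fun i => v (σ i), fun i => if i < j then φ i else if i = j then c else φ (k + j - i),
    ⟨?_, ?_, ?_, ?_⟩, ?_, ?_, ?_, ?_⟩
  · intro i hi i' hi' hii
    simp only [Set.mem_Iic] at hi hi'
    have := h1 (show σ i ∈ Set.Iic k by simp [Set.mem_Iic, hσmap i hi])
      (show σ i' ∈ Set.Iic k by simp [Set.mem_Iic, hσmap i' hi']) hii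
    exact hσinj i hi i' hi' this
  · intro i hi i' hi' hii
    simp only [Set.mem_Iio] at hi hi'
    by_cases c1 : i < j <;> by_cases c2 : i' < j <;>
      simp only [if_pos, if_neg, c1, c2, if_true, if_false] at hii
    · exact h2 (show i ∈ Set.Iio k by simp [Set.mem_Iio]; omega)
        (show i' ∈ Set.Iio k by simp [Set.mem_Iio]; omega) hii
    · by_cases c3 : i' = j
      · rw [if_pos c3] at hii
        exact absurd hii (hfresh i (by omega))
      · rw [if_neg c3] at hii
        have := h2 (show i ∈ Set.Iio k by simp [Set.mem_Iio]; omega)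
          (show k + j - i' ∈ Set.Iio k by simp [Set.mem_Iio]; omega) hii
        omega
    · by_cases c3 : i = j
      · rw [if_pos c3] at hii
        exact absurd hii.symm (hfresh i' (by omega))
      · rw [if_neg c3] at hii
        have := h2 (show k + j - i ∈ Set.Iio k by simp [Set.mem_Iio]; omega)
          (show i' ∈ Set.Iio k by simp [Set.mem_Iio]; omega) hii
        omega
    · by_cases c3 : i = j <;> by_cases c4 : i' = j
      · omega
      · rw [if_pos c3, if_neg c4] at hii
        exact absurd hii.symm (hfresh _ (by omega))
      · rw [if_neg c3, if_pos c4] at hii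
        exact absurd hii (hfresh _ (by omega))
      · rw [if_neg c3, if_neg c4] at hii
        have := h2 (show k + j - i ∈ Set.Iio k by simp [Set.mem_Iio]; omega)
          (show k + j - i' ∈ Set.Iio k by simp [Set.mem_Iio]; omega) hii
        omega
  · intro i hi
    by_cases c1 : i < j
    · simpa [c1] using h3 i (by omega)
    · by_cases c3 : i = j
      · simp [c1, c3, hc1, hc2]
      · simp only [if_neg c1, if_neg c3]
        exact h3 _ (by omega)
  · intro i hi
    by_cases c1 : i < j
    · have e1 : σ i = i := by simp [hσ]; omega
      have e2 : σ (i+1) = i + 1 := by simp [hσ]; omega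
      simp only [if_pos c1, e1, e2]
      exact h4 i (by omega)
    · by_cases c3 : i = j
      · subst c3
        have e1 : σ i = i := by simp [hσ]
        have e2 : σ (i+1) = k := by simp only [hσ]; rw [if_neg (by omega)]; omega
        simp only [if_neg (lt_irrefl i), if_pos rfl, e1, e2]
        exact hadj.symm
      · have e1 : σ i = k + j + 1 - i := by simp only [hσ]; rw [if_neg (by omega)]
        have e2 : σ (i+1) = k + j - i := by simp only [hσ]; rw [if_neg (by omega)]; omega
        have e3 : k + j + 1 - i = (k + j - i) + 1 := by omega
        simp only [if_neg c1, if_neg c3, e1, e2, e3]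
        exact (h4 (k + j - i) (by omega)).symm
  · show v (σ 0) = v 0
    simp [hσ]
  · show v (σ k) = v (j + 1)
    have : σ k = j + 1 := by simp only [hσ]; rw [if_neg (by omega)]; omega
    rw [this]
  · intro b
    constructor
    · rintro ⟨i, hi, rfl⟩
      exact ⟨σ i, hσmap i hi, rfl⟩
    · rintro ⟨t, ht, rfl⟩
      obtain ⟨i, hi, hsi⟩ := hσsurj t ht
      exact ⟨i, hi, show v (σ i) = v t by rw [hsi]⟩
  · intro i hi
    by_cases c1 : i < j
    · exact Or.inr ⟨i, by omega, by simp [c1]⟩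
    · by_cases c3 : i = j
      · exact Or.inl (by simp [c1, c3])
      · exact Or.inr ⟨k + j - i, by omega, by simp [c1, c3]⟩

section Ctx

variable {n : ℕ} {X Y : Finset V}

lemma deg_le (hdeg : ∀ i, 1 ≤ i → i ≤ 2*n → ∀ a : V, (n + 1) / 2 ≤ ((G i).neighborSet a).ncard)
    {i : ℕ} (hi1 : 1 ≤ i) (hi2 : i ≤ 2*n) (a : V) (t : Finset V)
    (ht : ∀ b, (G i).Adj a b → b ∈ t) : (n+1)/2 ≤ t.card := by
  have h1 := hdeg i hi1 hi2 a
  have h2 : (G i).neighborSet a ⊆ (t : Set V) := fun b hb => ht b hb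
  have h3 := Set.ncard_le_ncard h2 t.finite_toSet
  rw [Set.ncard_coe_finset] at h3
  omega

lemma deg_eq (hdeg : ∀ i, 1 ≤ i → i ≤ 2*n → ∀ a : V, (n + 1) / 2 ≤ ((G i).neighborSet a).ncard)
    {i : ℕ} (hi1 : 1 ≤ i) (hi2 : i ≤ 2*n) (a : V) (t : Finset V)
    (ht : ∀ b, (G i).Adj a b → b ∈ t) (hcard : t.card ≤ (n+1)/2) :
    ∀ b, (G i).Adj a b ↔ b ∈ t := by
  have h1 := hdeg i hi1 hi2 a
  have h2 : (G i).neighborSet a ⊆ (t : Set V) := fun b hb => ht b hb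
  have heq : (G i).neighborSet a = (t : Set V) := by
    refine Set.eq_of_subset_of_ncard_le h2 ?_ t.finite_toSet
    rw [Set.ncard_coe_finset]
    omega
  intro b
  constructor
  · exact fun h => ht b h
  · intro hb
    have : b ∈ (G i).neighborSet a := by rw [heq]; exact hb
    exact this

lemma side_iff (hdisj : Disjoint X Y) (hcov : ∀ w : V, w ∈ X ∨ w ∈ Y) (a : V) :
    a ∈ X ↔ a ∉ Y := by
  constructor
  · exact fun h h' => (Finset.disjoint_left.mp hdisj h) h'
  · intro h
    rcases hcov a with h' | h'
    · exact h'
    · exact absurd h' h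

variable {G : ℕ → SimpleGraph V}

lemma rp_alt (hdisj : Disjoint X Y) (hcov : ∀ w : V, w ∈ X ∨ w ∈ Y)
    (hbip : ∀ i, 1 ≤ i → i ≤ 2 * n → ∀ a b : V, (G i).Adj a b →
      (a ∈ X ∧ b ∈ Y) ∨ (a ∈ Y ∧ b ∈ X))
    {len : ℕ} {v : ℕ → V} {φ : ℕ → ℕ} (hp : IsRainbowPath G (2*n) len v φ) :
    ∀ i ≤ len, (v i ∈ X ↔ (Even i ↔ v 0 ∈ X)) := by
  intro i
  induction i with
  | zero => intro _; simp
  | succ i ih =>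
    intro h
    have hi : i < len := by omega
    have hadj := hp.2.2.2 i hi
    have hb := hp.2.2.1 i hi
    have hcross := hbip (φ i) hb.1 hb.2 _ _ hadj
    have hgl := ih (by omega)
    have hEx : Even (i+1) ↔ ¬ Even i := Nat.even_add_one
    have e1 := side_iff hdisj hcov (v i)
    have e2 := side_iff hdisj hcov (v (i+1))
    tauto

lemma rp_count (hdisj : Disjoint X Y) (hcov : ∀ w : V, w ∈ X ∨ w ∈ Y)
    (hbip : ∀ i, 1 ≤ i → i ≤ 2 * n → ∀ a b : V, (G i).Adj a b →
      (a ∈ X ∧ b ∈ Y) ∨ (a ∈ Y ∧ b ∈ X))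
    {len : ℕ} {v : ℕ → V} {φ : ℕ → ℕ} (hp : IsRainbowPath G (2*n) len v φ)
    (h0 : v 0 ∉ X) :
    (((range (len+1)).image v) ∩ X).card ≤ (len+1)/2 := by
  have alt := rp_alt hdisj hcov hbip hp
  have hsub : ((range (len+1)).image v) ∩ X ⊆
      ((range (len+1)).filter (fun i => ¬ Even i)).image v := by
    intro b hb
    simp only [Finset.mem_inter, Finset.mem_image, Finset.mem_range,
      Finset.mem_filter] at hb ⊢
    obtain ⟨⟨i, hi, rfl⟩, hbX⟩ := hb
    refine ⟨i, ⟨hi, ?_⟩, rfl⟩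
    intro hev
    have := (alt i (by omega)).mp hbX
    exact h0 (this.mp hev)
  calc (((range (len+1)).image v) ∩ X).card
      ≤ (((range (len+1)).filter (fun i => ¬ Even i)).image v).card := Finset.card_le_card hsub
    _ ≤ ((range (len+1)).filter (fun i => ¬ Even i)).card := Finset.card_image_le
    _ = (len+1)/2 := (card_even_odd_range (len+1)).2

lemma rp_endpoint_closed {k : ℕ}
    (hmax : ∀ (len' : ℕ) (v' : ℕ → V) (φ' : ℕ → ℕ), IsRainbowPath G (2*n) len' v' φ' → len' ≤ k)
    {v : ℕ → V} {φ : ℕ → ℕ} (hp : IsRainbowPath G (2*n) k v φ)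
    {c : ℕ} (hc1 : 1 ≤ c) (hc2 : c ≤ 2*n) (hfresh : ∀ i < k, φ i ≠ c)
    {b : V} (hadj : (G c).Adj (v k) b) : ∃ i ≤ k, v i = b := by
  by_contra hcon
  push_neg at hcon
  have hext := rp_extend hp hc1 hc2 hfresh hcon hadj
  have := hmax _ _ _ hext
  omega

lemma rc_alt (hdisj : Disjoint X Y) (hcov : ∀ w : V, w ∈ X ∨ w ∈ Y)
    (hbip : ∀ i, 1 ≤ i → i ≤ 2 * n → ∀ a b : V, (G i).Adj a b →
      (a ∈ X ∧ b ∈ Y) ∨ (a ∈ Y ∧ b ∈ X))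
    {m : ℕ} {w : ℕ → V} {ψ : ℕ → ℕ} (hc : IsRainbowCycle G (2*n) m w ψ) :
    ∀ i ≤ m, (w i ∈ X ↔ (Even i ↔ w 0 ∈ X)) := by
  intro i
  induction i with
  | zero => intro _; simp
  | succ i ih =>
    intro h
    have hi : i < m := by omega
    have hadj := hc.2.2.2.2 i hi
    have hb := hc.2.2.2.1 i hi
    have hcross := hbip (ψ i) hb.1 hb.2 _ _ hadj
    have hgl := ih (by omega)
    have hEx : Even (i+1) ↔ ¬ Even i := Nat.even_add_one
    have e1 := side_iff hdisj hcov (w i)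
    have e2 := side_iff hdisj hcov (w (i+1))
    tauto

lemma rc_even (hdisj : Disjoint X Y) (hcov : ∀ w : V, w ∈ X ∨ w ∈ Y)
    (hbip : ∀ i, 1 ≤ i → i ≤ 2 * n → ∀ a b : V, (G i).Adj a b →
      (a ∈ X ∧ b ∈ Y) ∨ (a ∈ Y ∧ b ∈ X))
    {m : ℕ} {w : ℕ → V} {ψ : ℕ → ℕ} (hc : IsRainbowCycle G (2*n) m w ψ) :
    Even m := by
  have alt := rc_alt hdisj hcov hbip hc m le_rfl
  rw [hc.2.1] at alt
  tauto

lemma rc_count (hdisj : Disjoint X Y) (hcov : ∀ w : V, w ∈ X ∨ w ∈ Y)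
    (hbip : ∀ i, 1 ≤ i → i ≤ 2 * n → ∀ a b : V, (G i).Adj a b →
      (a ∈ X ∧ b ∈ Y) ∨ (a ∈ Y ∧ b ∈ X))
    {m : ℕ} {w : ℕ → V} {ψ : ℕ → ℕ} (hc : IsRainbowCycle G (2*n) m w ψ) :
    (((range m).image w) ∩ X).card = m/2 := by
  have alt := rc_alt hdisj hcov hbip hc
  have hEm := rc_even hdisj hcov hbip hc
  have hinj : Set.InjOn w ↑(range m) := by
    intro a ha b hb hab
    simp only [Finset.coe_range, Set.mem_Iio] at ha hb
    exact hc.1 (by simpa using ha) (by simpa using hb) hab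
  have himg : ((range m).image w) ∩ X = ((range m).filter (fun i => w i ∈ X)).image w := by
    ext b
    simp only [Finset.mem_inter, Finset.mem_image, Finset.mem_range, Finset.mem_filter]
    constructor
    · rintro ⟨⟨i, hi, rfl⟩, hbX⟩
      exact ⟨i, ⟨hi, hbX⟩, rfl⟩
    · rintro ⟨i, ⟨hi, hiX⟩, rfl⟩
      exact ⟨⟨i, hi, rfl⟩, hiX⟩
  rw [himg, Finset.card_image_of_injOn (hinj.mono (by
    intro a ha
    simp only [Finset.coe_filter, Set.mem_setOf_eq, Finset.mem_range] at ha
    simp only [Finset.coe_range, Set.mem_Iio]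
    exact ha.1))]
  obtain ⟨t, rfl⟩ := hEm
  by_cases h0 : w 0 ∈ X
  · have : (range (t+t)).filter (fun i => w i ∈ X) = (range (t+t)).filter (fun i => Even i) := by
      apply Finset.filter_congr
      intro i hi
      simp only [Finset.mem_range] at hi
      simp only [alt i (by omega), h0, iff_true]
    rw [this, (card_even_odd_range (t+t)).1]
    omega
  · have : (range (t+t)).filter (fun i => w i ∈ X) = (range (t+t)).filter (fun i => ¬ Even i) := by
      apply Finset.filter_congr
      intro i hi
      simp only [Finset.mem_range] at hi
      constructor
      · intro hx
        intro hev
        exact h0 (((alt i (by omega)).mp hx).mp hev)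
      · intro hod
        rw [alt i (by omega)]
        tauto
    rw [this, (card_even_odd_range (t+t)).2]

end Ctx

section Build

variable {G : ℕ → SimpleGraph V} {s : ℕ}

lemma buildCycle {m' : ℕ} (hm' : 1 ≤ m') (X1 Y1 : Finset V) (U : Finset ℕ)
    (hx : X1.card = m') (hy : Y1.card = m') (hU : U.card = 2*m')
    (hUb : ∀ c ∈ U, 1 ≤ c ∧ c ≤ s)
    (hdisj1 : ∀ a ∈ X1, a ∉ Y1)
    (hadj : ∀ c ∈ U, ∀ x ∈ X1, ∀ y ∈ Y1, (G c).Adj x y) :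
    ∃ (w : ℕ → V) (ψ : ℕ → ℕ), IsRainbowCycle G s (2*m') w ψ ∧
      ((range (2*m')).image w = X1 ∪ Y1) ∧ ∀ i < 2*m', ψ i ∈ U := by
  classical
  have hlx : X1.toList.length = m' := by rw [Finset.length_toList, hx]
  have hly : Y1.toList.length = m' := by rw [Finset.length_toList, hy]
  have hlu : U.toList.length = 2*m' := by rw [Finset.length_toList, hU]
  set fx : ℕ → V := fun i => if h : i < X1.toList.length then X1.toList.get ⟨i, h⟩
    else X1.toList.get ⟨0, by omega⟩ with hfx
  set fy : ℕ → V := fun i => if h : i < Y1.toList.length then Y1.toList.get ⟨i, h⟩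
    else Y1.toList.get ⟨0, by omega⟩ with hfy
  set fu : ℕ → ℕ := fun i => if h : i < U.toList.length then U.toList.get ⟨i, h⟩ else 0 with hfu
  have hfxmem : ∀ i, fx i ∈ X1 := by
    intro i
    simp only [hfx]
    split <;> exact Finset.mem_toList.mp (List.get_mem _ _)
  have hfymem : ∀ i, fy i ∈ Y1 := by
    intro i
    simp only [hfy]
    split <;> exact Finset.mem_toList.mp (List.get_mem _ _)
  have hfumem : ∀ i < 2*m', fu i ∈ U := by
    intro i hi
    simp only [hfu]
    rw [dif_pos (show i < U.toList.length by omega)]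
    exact Finset.mem_toList.mp (List.get_mem _ _)
  have hfxinj : ∀ i < m', ∀ j < m', fx i = fx j → i = j := by
    intro i hi j hj he
    simp only [hfx] at he
    simp only [dif_pos (show i < X1.toList.length by omega),
      dif_pos (show j < X1.toList.length by omega)] at he
    have := (X1.nodup_toList.get_inj_iff).mp he
    exact Fin.mk.inj_iff.mp this
  have hfyinj : ∀ i < m', ∀ j < m', fy i = fy j → i = j := by
    intro i hi j hj he
    simp only [hfy] at he
    simp only [dif_pos (show i < Y1.toList.length by omega),
      dif_pos (show j < Y1.toList.length by omega)] at he
    have := (Y1.nodup_toList.get_inj_iff).mp he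
    exact Fin.mk.inj_iff.mp this
  have hfuinj : ∀ i < 2*m', ∀ j < 2*m', fu i = fu j → i = j := by
    intro i hi j hj he
    simp only [hfu] at he
    simp only [dif_pos (show i < U.toList.length by omega),
      dif_pos (show j < U.toList.length by omega)] at he
    have := (U.nodup_toList.get_inj_iff).mp he
    exact Fin.mk.inj_iff.mp this
  have hfxsurj : ∀ b ∈ X1, ∃ i < m', fx i = b := by
    intro b hb
    obtain ⟨⟨i, hi⟩, he⟩ := List.mem_iff_get.mp (Finset.mem_toList.mpr hb)
    exact ⟨i, by omega, by simp only [hfx]; rw [dif_pos hi]; exact he⟩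
  have hfysurj : ∀ b ∈ Y1, ∃ i < m', fy i = b := by
    intro b hb
    obtain ⟨⟨i, hi⟩, he⟩ := List.mem_iff_get.mp (Finset.mem_toList.mpr hb)
    exact ⟨i, by omega, by simp only [hfy]; rw [dif_pos hi]; exact he⟩
  set M := 2*m' with hM
  set w : ℕ → V := fun i => if (i % M) % 2 = 0 then fx ((i % M)/2) else fy ((i % M)/2) with hw
  set ψ : ℕ → ℕ := fun i => fu (i % M) with hψ
  have hwlt : ∀ i < M, w i = if i % 2 = 0 then fx (i/2) else fy (i/2) := by
    intro i hi
    rw [hw]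
    simp only [Nat.mod_eq_of_lt hi]
  have hwhalf : ∀ i < M, i % 2 = 0 → w i = fx (i/2) := by
    intro i hi h2
    rw [hwlt i hi, if_pos h2]
  have hwhalf' : ∀ i < M, i % 2 = 1 → w i = fy (i/2) := by
    intro i hi h2
    rw [hwlt i hi, if_neg (by omega)]
  have hwM : w M = fx 0 := by
    rw [hw]
    simp only [Nat.mod_self]
    norm_num
  have hw0 : w 0 = fx 0 := by
    rw [hw]
    simp only [Nat.zero_mod]
    norm_num
  have hinjw : Set.InjOn w (Set.Iio M) := by
    intro i hi j hj he
    simp only [Set.mem_Iio] at hi hj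
    by_cases p1 : i % 2 = 0 <;> by_cases p2 : j % 2 = 0
    · rw [hwhalf i hi p1, hwhalf j hj p2] at he
      have := hfxinj (i/2) (by omega) (j/2) (by omega) he
      omega
    · rw [hwhalf i hi p1, hwhalf' j hj (by omega)] at he
      exact absurd (he ▸ hfxmem (i/2)) (fun h => hdisj1 _ h (hfymem (j/2)) |>.elim)
    · rw [hwhalf' i hi (by omega), hwhalf j hj p2] at he
      exact absurd (he ▸ hfymem (i/2) : fy (i/2) ∈ Y1) (by rw [he]; exact fun h => hdisj1 _ (hfxmem (j/2)) h)
    · rw [hwhalf' i hi (by omega), hwhalf' j hj (by omega)] at he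
      have := hfyinj (i/2) (by omega) (j/2) (by omega) he
      omega
  refine ⟨w, ψ, ⟨hinjw, by rw [hwM, hw0], ?_, ?_, ?_⟩, ?_, ?_⟩
  · intro i hi j hj he
    simp only [Set.mem_Iio] at hi hj
    rw [hψ] at he
    simp only [Nat.mod_eq_of_lt hi, Nat.mod_eq_of_lt hj] at he
    exact hfuinj i hi j hj he
  · intro i hi
    rw [hψ]
    simp only [Nat.mod_eq_of_lt hi]
    exact hUb _ (hfumem i hi)
  · intro i hi
    have hψi : ψ i = fu i := by rw [hψ]; simp only [Nat.mod_eq_of_lt hi]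
    have hui : fu i ∈ U := hfumem i hi
    by_cases p1 : i % 2 = 0
    · have hi1 : i + 1 < M := by omega
      have e1 : (i+1) % 2 = 1 := by omega
      have e2 : (i+1)/2 = i/2 := by omega
      rw [hψi, hwhalf i hi p1, hwhalf' (i+1) hi1 e1, e2]
      exact hadj _ hui _ (hfxmem _) _ (hfymem _)
    · by_cases hi1 : i + 1 < M
      · have e1 : (i+1) % 2 = 0 := by omega
        rw [hψi, hwhalf' i hi (by omega), hwhalf (i+1) hi1 e1]
        exact (hadj _ hui _ (hfxmem _) _ (hfymem _)).symm
      · have e1 : i + 1 = M := by omega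
        rw [hψi, hwhalf' i hi (by omega), e1, hwM]
        exact (hadj _ hui _ (hfxmem _) _ (hfymem _)).symm
  · ext b
    simp only [Finset.mem_image, Finset.mem_range, Finset.mem_union]
    constructor
    · rintro ⟨i, hi, rfl⟩
      by_cases p1 : i % 2 = 0
      · rw [hwhalf i hi p1]
        exact Or.inl (hfxmem _)
      · rw [hwhalf' i hi (by omega)]
        exact Or.inr (hfymem _)
    · rintro (hb | hb)
      · obtain ⟨t, ht, he⟩ := hfxsurj b hb
        refine ⟨2*t, by omega, ?_⟩
        rw [hwhalf (2*t) (by omega) (by omega), show (2*t)/2 = t by omega, he]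
      · obtain ⟨t, ht, he⟩ := hfysurj b hb
        refine ⟨2*t+1, by omega, ?_⟩
        rw [hwhalf' (2*t+1) (by omega) (by omega), show (2*t+1)/2 = t by omega, he]
  · intro i hi
    rw [hψ]
    simp only [Nat.mod_eq_of_lt hi]
    exact hfumem i hi

end Build

def patt (X Y A : Finset V) (a b : V) : Prop :=
  (a ∈ X ∩ A ∧ b ∈ Y ∩ A) ∨ (b ∈ X ∩ A ∧ a ∈ Y ∩ A) ∨
  (a ∈ X \ A ∧ b ∈ Y \ A) ∨ (b ∈ X \ A ∧ a ∈ Y \ A)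

section Cyc

variable {n : ℕ} {X Y : Finset V} {G : ℕ → SimpleGraph V}

lemma cycleStructure
    (hdisj : Disjoint X Y) (hcov : ∀ w : V, w ∈ X ∨ w ∈ Y)
    (hX : X.card = n) (hY : Y.card = n)
    (hbip : ∀ i, 1 ≤ i → i ≤ 2 * n → ∀ a b : V, (G i).Adj a b →
      (a ∈ X ∧ b ∈ Y) ∨ (a ∈ Y ∧ b ∈ X))
    (hdeg : ∀ i, 1 ≤ i → i ≤ 2*n → ∀ a : V, (n + 1) / 2 ≤ ((G i).neighborSet a).ncard)
    {m : ℕ} (hm1 : 1 ≤ m) (hm2 : m ≤ 2*n - 1)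
    (hmaxm : ∀ (len' : ℕ) (v' : ℕ → V) (φ' : ℕ → ℕ),
      IsRainbowPath G (2*n) len' v' φ' → len' + 1 ≤ m)
    {w : ℕ → V} {ψ : ℕ → ℕ} (hc : IsRainbowCycle G (2*n) m w ψ) :
    Even n ∧ m = n ∧ (X ∩ (range m).image w).card = n/2 ∧ (Y ∩ (range m).image w).card = n/2 ∧
    ∀ c, 1 ≤ c → c ≤ 2*n → (∀ i < m, ψ i ≠ c) →
      ∀ a b : V, (G c).Adj a b ↔ patt X Y ((range m).image w) a b := by
  classical
  obtain ⟨hw1, hwm, hψ1, hψb, hψe⟩ := id hc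
  have hn : 1 ≤ n := by omega
  set A := (range m).image w with hA
  have hAmem : ∀ a, a ∈ A ↔ ∃ r < m, w r = a := by
    intro a
    simp [hA, Finset.mem_image, Finset.mem_range]
  have hAcard : A.card = m := by
    rw [hA, Finset.card_image_of_injOn (by
      intro a ha b hb hab
      simp only [Finset.coe_range, Set.mem_Iio] at ha hb
      exact hw1 (by simpa using ha) (by simpa using hb) hab), Finset.card_range]
  have hmax' : ∀ (len' : ℕ) (v' : ℕ → V) (φ' : ℕ → ℕ),
      IsRainbowPath G (2*n) len' v' φ' → len' ≤ m - 1 := by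
    intro len' v' φ' h
    have := hmaxm _ _ _ h
    omega
  -- endpoints of broken cycle are closed in A
  have hclosed : ∀ r < m, ∀ c, 1 ≤ c → c ≤ 2*n → (∀ i < m, ψ i ≠ c) →
      ∀ b : V, (G c).Adj (w r) b → b ∈ A := by
    intro r hr c hc1 hc2 hfresh b hadj
    have hbr := rc_break hc hr
    have hrev := rp_reverse hbr
    have hfresh' : ∀ i < m - 1, (fun i => (fun i => ψ ((r + i) % m)) (m - 1 - 1 - i)) i ≠ c := by
      intro i hi
      exact hfresh _ (Nat.mod_lt _ (by omega))
    have hadj' : (G c).Adj ((fun i => (fun i => w ((r + i) % m)) (m - 1 - i)) (m-1)) b := by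
      show (G c).Adj (w ((r + (m - 1 - (m - 1))) % m)) b
      rw [Nat.sub_self, Nat.add_zero, Nat.mod_eq_of_lt hr]
      exact hadj
    obtain ⟨i, hi, he⟩ := rp_endpoint_closed hmax' hrev hc1 hc2 hfresh' hadj'
    rw [hAmem]
    exact ⟨(r + (m - 1 - i)) % m, Nat.mod_lt _ (by omega), he⟩
  -- off-cycle vertices have no fresh edges into A
  have hoff : ∀ u, u ∉ A → ∀ c, 1 ≤ c → c ≤ 2*n → (∀ i < m, ψ i ≠ c) →
      ∀ b : V, (G c).Adj u b → b ∉ A := by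
    intro u hu c hc1 hc2 hfresh b hadj hbA
    obtain ⟨r, hr, rfl⟩ := (hAmem b).mp hbA
    exact hu (hclosed r hr c hc1 hc2 hfresh u hadj.symm)
  -- side counts
  have hbip' : ∀ i, 1 ≤ i → i ≤ 2 * n → ∀ a b : V, (G i).Adj a b →
      (a ∈ Y ∧ b ∈ X) ∨ (a ∈ X ∧ b ∈ Y) := fun i hi1 hi2 a b h => (hbip i hi1 hi2 a b h).symm
  have hXA : (X ∩ A).card = m/2 := by
    rw [Finset.inter_comm]
    exact rc_count hdisj hcov hbip hc
  have hYA : (Y ∩ A).card = m/2 := by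
    rw [Finset.inter_comm]
    exact rc_count hdisj.symm (fun a => (hcov a).symm) hbip' hc
  have hEm := rc_even hdisj hcov hbip hc
  have hXoff : (X \ A).card = n - m/2 := by
    have h1 := Finset.card_inter_add_card_sdiff X A
    omega
  have hYoff : (Y \ A).card = n - m/2 := by
    have h1 := Finset.card_inter_add_card_sdiff Y A
    omega
  -- a fresh colour
  have hLsub : (range m).image ψ ⊆ Finset.Icc 1 (2*n) := by
    intro c hcm
    simp only [Finset.mem_image, Finset.mem_range] at hcm
    obtain ⟨i, hi, rfl⟩ := hcm
    exact Finset.mem_Icc.mpr (hψb i hi)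
  have hLcard : ((range m).image ψ).card = m := by
    rw [Finset.card_image_of_injOn (by simpa using hψ1), Finset.card_range]
  have hFcard : (Finset.Icc 1 (2*n) \ (range m).image ψ).card = 2*n - m := by
    rw [Finset.card_sdiff_of_subset hLsub, hLcard, Nat.card_Icc]
    omega
  have hFne : (Finset.Icc 1 (2*n) \ (range m).image ψ).Nonempty := by
    rw [← Finset.card_pos, hFcard]
    omega
  obtain ⟨c₀, hc₀⟩ := hFne
  rw [Finset.mem_sdiff, Finset.mem_Icc] at hc₀
  have hfresh₀ : ∀ i < m, ψ i ≠ c₀ := by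
    intro i hi he
    exact hc₀.2 (Finset.mem_image.mpr ⟨i, Finset.mem_range.mpr hi, he⟩)
  -- generic adjacency target lemma
  have hsidetgt : ∀ c, 1 ≤ c → c ≤ 2*n → (∀ i < m, ψ i ≠ c) →
      ∀ a : V, (a ∈ A → (a ∈ X → ∀ b, (G c).Adj a b → b ∈ Y ∩ A) ∧
                        (a ∈ Y → ∀ b, (G c).Adj a b → b ∈ X ∩ A)) ∧
               (a ∉ A → (a ∈ X → ∀ b, (G c).Adj a b → b ∈ Y \ A) ∧
                        (a ∈ Y → ∀ b, (G c).Adj a b → b ∈ X \ A)) := by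
    intro c hc1 hc2 hfresh a
    constructor
    · intro haA
      obtain ⟨r, hr, rfl⟩ := (hAmem a).mp haA
      constructor
      · intro haX b hadj
        refine Finset.mem_inter.mpr ⟨?_, hclosed r hr c hc1 hc2 hfresh b hadj⟩
        rcases hbip c hc1 hc2 _ _ hadj with ⟨-, hb⟩ | ⟨ha', -⟩
        · exact hb
        · exact absurd ha' ((side_iff hdisj hcov _).mp haX)
      · intro haY b hadj
        refine Finset.mem_inter.mpr ⟨?_, hclosed r hr c hc1 hc2 hfresh b hadj⟩
        rcases hbip c hc1 hc2 _ _ hadj with ⟨ha', -⟩ | ⟨-, hb⟩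
        · exact absurd haY ((side_iff hdisj hcov _).mp ha')
        · exact hb
    · intro haA
      constructor
      · intro haX b hadj
        refine Finset.mem_sdiff.mpr ⟨?_, hoff a haA c hc1 hc2 hfresh b hadj⟩
        rcases hbip c hc1 hc2 _ _ hadj with ⟨-, hb⟩ | ⟨ha', -⟩
        · exact hb
        · exact absurd ha' ((side_iff hdisj hcov _).mp haX)
      · intro haY b hadj
        refine Finset.mem_sdiff.mpr ⟨?_, hoff a haA c hc1 hc2 hfresh b hadj⟩
        rcases hbip c hc1 hc2 _ _ hadj with ⟨ha', -⟩ | ⟨-, hb⟩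
        · exact absurd haY ((side_iff hdisj hcov _).mp ha')
        · exact hb
  -- counting : m = n and n even
  have hw0A : w 0 ∈ A := (hAmem (w 0)).mpr ⟨0, by omega, rfl⟩
  have hcnt1 : (n+1)/2 ≤ m/2 := by
    rcases hcov (w 0) with h0 | h0
    · have := deg_le (G := G) hdeg hc₀.1.1 hc₀.1.2 (w 0) (Y ∩ A)
        (((hsidetgt c₀ hc₀.1.1 hc₀.1.2 hfresh₀ (w 0)).1 hw0A).1 h0)
      omega
    · have := deg_le (G := G) hdeg hc₀.1.1 hc₀.1.2 (w 0) (X ∩ A)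
        (((hsidetgt c₀ hc₀.1.1 hc₀.1.2 hfresh₀ (w 0)).1 hw0A).2 h0)
      omega
  have hucard : ((X ∪ Y) \ A).Nonempty := by
    rw [← Finset.card_pos]
    have hsub : A ⊆ X ∪ Y := by
      intro a ha
      rcases hcov a with h | h
      · exact Finset.mem_union_left _ h
      · exact Finset.mem_union_right _ h
    rw [Finset.card_sdiff_of_subset hsub, Finset.card_union_of_disjoint hdisj, hX, hY, hAcard]
    omega
  obtain ⟨u, hu⟩ := hucard
  rw [Finset.mem_sdiff] at hu
  have hcnt2 : (n+1)/2 ≤ n - m/2 := by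
    rcases hcov u with h0 | h0
    · have := deg_le (G := G) hdeg hc₀.1.1 hc₀.1.2 u (Y \ A)
        (((hsidetgt c₀ hc₀.1.1 hc₀.1.2 hfresh₀ u).2 hu.2).1 h0)
      omega
    · have := deg_le (G := G) hdeg hc₀.1.1 hc₀.1.2 u (X \ A)
        (((hsidetgt c₀ hc₀.1.1 hc₀.1.2 hfresh₀ u).2 hu.2).2 h0)
      omega
  have hm2' : m % 2 = 0 := Nat.even_iff.mp hEm
  have hmn : m = n ∧ n % 2 = 0 := by omega
  obtain ⟨hmn', hnev⟩ := hmn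
  refine ⟨Nat.even_iff.mpr hnev, hmn', by omega, by omega, ?_⟩
  -- exact structure
  intro c hc1 hc2 hfresh a b
  have hiff : ∀ t : Finset V, t.card ≤ (n+1)/2 → (∀ b', (G c).Adj a b' → b' ∈ t) →
      ((G c).Adj a b ↔ b ∈ t) :=
    fun t ht h' => deg_eq (G := G) hdeg hc1 hc2 a t h' ht b
  have hside := hsidetgt c hc1 hc2 hfresh a
  have haX' := side_iff hdisj hcov a
  have hbX' := side_iff hdisj hcov b
  by_cases haA : a ∈ A <;> rcases hcov a with haS | haS
  · rw [hiff (Y ∩ A) (by omega) ((hside.1 haA).1 haS)]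
    simp only [patt, Finset.mem_inter, Finset.mem_sdiff]
    constructor
    · intro hb
      exact Or.inl ⟨⟨haS, haA⟩, hb⟩
    · rintro (⟨-, hb⟩ | ⟨-, ⟨haY, -⟩⟩ | ⟨⟨-, haA'⟩, -⟩ | ⟨-, ⟨haY, -⟩⟩)
      · exact hb
      · exact absurd haY (haX'.mp haS)
      · exact absurd haA haA'
      · exact absurd haY (haX'.mp haS)
  · rw [hiff (X ∩ A) (by omega) ((hside.1 haA).2 haS)]
    simp only [patt, Finset.mem_inter, Finset.mem_sdiff]
    constructor
    · intro hb
      exact Or.inr (Or.inl ⟨hb, haS, haA⟩)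
    · rintro (⟨⟨haX, -⟩, -⟩ | ⟨hb, -⟩ | ⟨⟨haX, -⟩, -⟩ | ⟨-, ⟨-, haA'⟩⟩)
      · exact absurd haS (haX'.mp haX)
      · exact hb
      · exact absurd haS (haX'.mp haX)
      · exact absurd haA haA'
  · rw [hiff (Y \ A) (by omega) ((hside.2 haA).1 haS)]
    simp only [patt, Finset.mem_inter, Finset.mem_sdiff]
    constructor
    · intro hb
      exact Or.inr (Or.inr (Or.inl ⟨⟨haS, haA⟩, hb⟩))
    · rintro (⟨⟨-, haA'⟩, -⟩ | ⟨-, ⟨haY, -⟩⟩ | ⟨-, hb⟩ | ⟨-, ⟨haY, -⟩⟩)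
      · exact absurd haA' haA
      · exact absurd haY (haX'.mp haS)
      · exact hb
      · exact absurd haY (haX'.mp haS)
  · rw [hiff (X \ A) (by omega) ((hside.2 haA).2 haS)]
    simp only [patt, Finset.mem_inter, Finset.mem_sdiff]
    constructor
    · intro hb
      exact Or.inr (Or.inr (Or.inr ⟨hb, haS, haA⟩))
    · rintro (⟨⟨haX, -⟩, -⟩ | ⟨-, ⟨-, haA'⟩⟩ | ⟨⟨haX, -⟩, -⟩ | ⟨hb, -⟩)
      · exact absurd haS (haX'.mp haX)
      · exact absurd haA' haA
      · exact absurd haS (haX'.mp haX)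
      · exact hb

end Cyc

section Main

variable {n : ℕ} {X Y : Finset V} {G : ℕ → SimpleGraph V}

lemma noCycleCase
    (hdisj : Disjoint X Y) (hcov : ∀ w : V, w ∈ X ∨ w ∈ Y)
    (hX : X.card = n) (hY : Y.card = n)
    (hbip : ∀ i, 1 ≤ i → i ≤ 2 * n → ∀ a b : V, (G i).Adj a b →
      (a ∈ X ∧ b ∈ Y) ∨ (a ∈ Y ∧ b ∈ X))
    (hdeg : ∀ i, 1 ≤ i → i ≤ 2*n → ∀ a : V, (n + 1) / 2 ≤ ((G i).neighborSet a).ncard)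
    (hn : 1 ≤ n) {k : ℕ} (hk2 : k ≤ 2*n - 2)
    {v : ℕ → V} {φ : ℕ → ℕ} (hp : IsRainbowPath G (2*n) k v φ)
    (hvk : v k ∈ X)
    (hmax : ∀ (len' : ℕ) (v' : ℕ → V) (φ' : ℕ → ℕ),
      IsRainbowPath G (2*n) len' v' φ' → len' ≤ k)
    (hnc : ∀ (w : ℕ → V) (ψ : ℕ → ℕ), ¬ IsRainbowCycle G (2*n) (k+1) w ψ) : False := by
  classical
  obtain ⟨h1, h2, h3, h4⟩ := id hp
  -- two fresh labels
  have hLcard : ((range k).image φ).card = k := by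
    rw [Finset.card_image_of_injOn (by simpa using h2), Finset.card_range]
  have hLsub : (range k).image φ ⊆ Finset.Icc 1 (2*n) := by
    intro c hc
    simp only [Finset.mem_image, Finset.mem_range] at hc
    obtain ⟨i, hi, rfl⟩ := hc
    exact Finset.mem_Icc.mpr (h3 i hi)
  have hFcard : (Finset.Icc 1 (2*n) \ (range k).image φ).card = 2*n - k := by
    rw [Finset.card_sdiff_of_subset hLsub, hLcard, Nat.card_Icc]
    omega
  obtain ⟨c1, hc1F, c2, hc2F, hc12⟩ := Finset.one_lt_card.mp
    (by rw [hFcard]; omega : 1 < (Finset.Icc 1 (2*n) \ (range k).image φ).card)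
  rw [Finset.mem_sdiff, Finset.mem_Icc] at hc1F hc2F
  have hfresh1 : ∀ i < k, φ i ≠ c1 := by
    intro i hi he
    exact hc1F.2 (Finset.mem_image.mpr ⟨i, Finset.mem_range.mpr hi, he⟩)
  have hfresh2 : ∀ i < k, φ i ≠ c2 := by
    intro i hi he
    exact hc2F.2 (Finset.mem_image.mpr ⟨i, Finset.mem_range.mpr hi, he⟩)
  -- rotation index set
  set J := (range k).filter (fun j => (G c1).Adj (v k) (v j)) with hJ
  have hJcard : (n+1)/2 ≤ J.card := by
    have hle := deg_le (G := G) hdeg hc1F.1.1 hc1F.1.2 (v k) (J.image v) ?_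
    · exact le_trans hle Finset.card_image_le
    · intro b hadj
      obtain ⟨i, hik, rfl⟩ := rp_endpoint_closed hmax hp hc1F.1.1 hc1F.1.2 hfresh1 hadj
      have : i ≠ k := by
        intro he
        subst he
        exact hadj.ne rfl
      refine Finset.mem_image.mpr ⟨i, ?_, rfl⟩
      rw [hJ, Finset.mem_filter, Finset.mem_range]
      exact ⟨by omega, hadj⟩
  have hJmem : ∀ j ∈ J, j < k ∧ (G c1).Adj (v k) (v j) := by
    intro j hj
    rw [hJ, Finset.mem_filter, Finset.mem_range] at hj
    exact hj
  set S := J.image (fun j => v (j+1)) with hS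
  have hScard : S.card = J.card := by
    apply Finset.card_image_of_injOn
    intro a ha b hb hab
    have ha' : a < k := (hJmem a (Finset.mem_coe.mp ha)).1
    have hb' : b < k := (hJmem b (Finset.mem_coe.mp hb)).1
    have := h1 (show a + 1 ∈ Set.Iic k by simp [Set.mem_Iic]; omega)
      (show b + 1 ∈ Set.Iic k by simp [Set.mem_Iic]; omega) hab
    omega
  have hSX : ∀ b ∈ S, b ∈ X ∧ ∃ i ≤ k, v i = b := by
    intro b hb
    obtain ⟨j, hj, rfl⟩ := Finset.mem_image.mp hb
    obtain ⟨hjk, hadj⟩ := hJmem j hj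
    have hnvkY : v k ∉ Y := (side_iff hdisj hcov (v k)).mp hvk
    have hvjY : v j ∈ Y := by
      rcases hbip c1 hc1F.1.1 hc1F.1.2 _ _ hadj with ⟨-, hy⟩ | ⟨hy, -⟩
      · exact hy
      · exact absurd hy hnvkY
    have hvjX : v j ∉ X := fun h => ((side_iff hdisj hcov (v j)).mp h) hvjY
    refine ⟨?_, j+1, by omega, rfl⟩
    rcases hbip (φ j) (h3 j hjk).1 (h3 j hjk).2 _ _ (h4 j hjk) with ⟨hx, -⟩ | ⟨-, hx⟩
    · exact absurd hx hvjX
    · exact hx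
  have hS0 : v 0 ∉ S := by
    intro hin
    obtain ⟨j, hj, he⟩ := Finset.mem_image.mp hin
    obtain ⟨hjk, -⟩ := hJmem j hj
    have := h1 (show j + 1 ∈ Set.Iic k by simp [Set.mem_Iic]; omega)
      (show 0 ∈ Set.Iic k by simp) he
    omega
  -- rotated paths
  have hQ : ∀ j ∈ J, ∃ (v' : ℕ → V) (φ' : ℕ → ℕ),
      IsRainbowPath G (2*n) k v' φ' ∧ v' 0 = v 0 ∧ v' k = v (j+1) ∧
      (∀ b : V, (∃ i ≤ k, v' i = b) ↔ (∃ i ≤ k, v i = b)) ∧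
      (∀ i < k, φ' i ≠ c2) := by
    intro j hj
    obtain ⟨hjk, hadj⟩ := hJmem j hj
    by_cases hj1 : j = k - 1
    · refine ⟨v, φ, hp, rfl, by rw [show j + 1 = k by omega], fun b => Iff.rfl, hfresh2⟩
    · obtain ⟨v', φ', hp', he0, hek, himg, hlab⟩ :=
        rp_rotate hp (by omega) hc1F.1.1 hc1F.1.2 hfresh1 hadj
      refine ⟨v', φ', hp', he0, hek, himg, ?_⟩
      intro i hi
      rcases hlab i hi with he | ⟨t, ht, he⟩
      · rw [he]; exact hc12
      · rw [he]; exact hfresh2 t ht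
  -- reverse path endpoint closure at v 0
  have hrev := rp_reverse hp
  have hv0closed : ∀ b : V, (G c2).Adj (v 0) b → ∃ i ≤ k, v i = b := by
    intro b hadj
    have := rp_endpoint_closed hmax hrev hc2F.1.1 hc2F.1.2
      (fun i hi => hfresh2 _ (by omega)) (b := b)
      (by show (G c2).Adj (v (k - k)) b; rw [Nat.sub_self]; exact hadj)
    obtain ⟨i, hik, he⟩ := this
    exact ⟨k - i, by omega, he⟩
  by_cases h0X : v 0 ∈ X
  · -- both endpoints in X : extend a rotated path to an off-path vertex of Y
    have hdisj' : Disjoint Y X := hdisj.symm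
    have hcov' : ∀ w : V, w ∈ Y ∨ w ∈ X := fun w => (hcov w).symm
    have hbip' : ∀ i, 1 ≤ i → i ≤ 2 * n → ∀ a b : V, (G i).Adj a b →
        (a ∈ Y ∧ b ∈ X) ∨ (a ∈ X ∧ b ∈ Y) := fun i hi1 hi2 a b h => (hbip i hi1 hi2 a b h).symm
    have hcnt : (((range (k+1)).image v) ∩ Y).card ≤ (k+1)/2 :=
      rp_count (n := n) hdisj' hcov' hbip' hp ((side_iff hdisj hcov (v 0)).mp h0X)
    have hyex : (Y \ ((range (k+1)).image v)).Nonempty := by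
      rw [← Finset.card_pos]
      have := Finset.card_inter_add_card_sdiff Y ((range (k+1)).image v)
      rw [Finset.inter_comm] at this
      omega
    obtain ⟨y, hy⟩ := hyex
    rw [Finset.mem_sdiff] at hy
    have hynotv : ∀ i ≤ k, v i ≠ y := by
      intro i hik he
      exact hy.2 (Finset.mem_image.mpr ⟨i, Finset.mem_range.mpr (by omega), he⟩)
    set T := X.filter (fun b => (G c2).Adj y b) with hT
    have hTcard : (n+1)/2 ≤ T.card := by
      apply deg_le (G := G) hdeg hc2F.1.1 hc2F.1.2 y
      intro b hadj
      rw [hT, Finset.mem_filter]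
      refine ⟨?_, hadj⟩
      rcases hbip c2 hc2F.1.1 hc2F.1.2 _ _ hadj with ⟨hx, -⟩ | ⟨-, hx⟩
      · exact absurd hy.1 ((side_iff hdisj hcov y).mp hx)
      · exact hx
    have hST : ∀ b ∈ S, b ∉ T := by
      intro b hb hbT
      obtain ⟨j, hj, rfl⟩ := Finset.mem_image.mp hb
      obtain ⟨v', φ', hp', he0, hek, himg, hlab⟩ := hQ j hj
      rw [hT, Finset.mem_filter] at hbT
      have hadj' : (G c2).Adj (v' k) y := by rw [hek]; exact hbT.2.symm
      have hu : ∀ i ≤ k, v' i ≠ y := by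
        intro i hik he
        obtain ⟨t, htk, hte⟩ := (himg y).mp ⟨i, hik, he⟩
        exact hynotv t htk hte
      have hext := rp_extend hp' hc2F.1.1 hc2F.1.2 hlab hu hadj'
      have := hmax _ _ _ hext
      omega
    have hT0 : v 0 ∉ T := by
      intro hin
      rw [hT, Finset.mem_filter] at hin
      obtain ⟨i, hik, he⟩ := hv0closed y hin.2.symm
      exact hynotv i hik he
    -- counting in X
    have hsub : S ∪ T ∪ {v 0} ⊆ X := by
      intro b hb
      simp only [Finset.mem_union, Finset.mem_singleton] at hb
      rcases hb with (hb | hb) | hb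
      · exact (hSX b hb).1
      · exact (Finset.mem_filter.mp hb).1
      · rw [hb]; exact h0X
    have hd1 : Disjoint S T := Finset.disjoint_left.mpr hST
    have hd2 : Disjoint (S ∪ T) {v 0} := by
      rw [Finset.disjoint_singleton_right, Finset.mem_union]
      rintro (h | h)
      · exact hS0 h
      · exact hT0 h
    have := Finset.card_le_card hsub
    rw [Finset.card_union_of_disjoint hd2, Finset.card_union_of_disjoint hd1,
      Finset.card_singleton, hX] at this
    omega
  · -- endpoints in different parts : close up a cycle, contradiction with hnc
    have h0Y : v 0 ∈ Y := (hcov _).resolve_left h0X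
    set T := (((range (k+1)).image v) ∩ X).filter (fun b => (G c2).Adj (v 0) b) with hT
    have hTcard : (n+1)/2 ≤ T.card := by
      apply deg_le (G := G) hdeg hc2F.1.1 hc2F.1.2 (v 0)
      intro b hadj
      rw [hT, Finset.mem_filter, Finset.mem_inter]
      obtain ⟨i, hik, he⟩ := hv0closed b hadj
      refine ⟨⟨Finset.mem_image.mpr ⟨i, Finset.mem_range.mpr (by omega), he⟩, ?_⟩, hadj⟩
      rcases hbip c2 hc2F.1.1 hc2F.1.2 _ _ hadj with ⟨hx, -⟩ | ⟨-, hx⟩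
      · exact absurd h0Y ((side_iff hdisj hcov (v 0)).mp hx)
      · exact hx
    have hST : ∀ b ∈ S, b ∉ T := by
      intro b hb hbT
      obtain ⟨j, hj, rfl⟩ := Finset.mem_image.mp hb
      obtain ⟨v', φ', hp', he0, hek, himg, hlab⟩ := hQ j hj
      rw [hT, Finset.mem_filter] at hbT
      have hadj' : (G c2).Adj (v' k) (v' 0) := by rw [hek, he0]; exact hbT.2.symm
      have hcyc := rp_close hp' hc2F.1.1 hc2F.1.2 hlab hadj'
      exact hnc _ _ hcyc
    have hsub : S ∪ T ⊆ ((range (k+1)).image v) ∩ X := by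
      intro b hb
      rcases Finset.mem_union.mp hb with hb | hb
      · obtain ⟨hbX, i, hik, he⟩ := hSX b hb
        exact Finset.mem_inter.mpr
          ⟨Finset.mem_image.mpr ⟨i, Finset.mem_range.mpr (by omega), he⟩, hbX⟩
      · exact Finset.filter_subset _ _ hb
    have hcnt : (((range (k+1)).image v) ∩ X).card ≤ (k+1)/2 :=
      rp_count hdisj hcov hbip hp h0X
    have hd1 : Disjoint S T := Finset.disjoint_left.mpr hST
    have := Finset.card_le_card hsub
    rw [Finset.card_union_of_disjoint hd1] at this
    omega

end Main

end Lemmas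

theorem stmt17 (n : ℕ) (G : ℕ → SimpleGraph V) (X Y : Finset V)
    (hdisj : Disjoint X Y) (hcov : ∀ w : V, w ∈ X ∨ w ∈ Y)
    (hX : X.card = n) (hY : Y.card = n)
    (hbip : ∀ i, 1 ≤ i → i ≤ 2 * n → ∀ a b : V, (G i).Adj a b →
      (a ∈ X ∧ b ∈ Y) ∨ (a ∈ Y ∧ b ∈ X))
    (hdeg : ∀ i, 1 ≤ i → i ≤ 2 * n → ∀ a : V, (n + 1) / 2 ≤ ((G i).neighborSet a).ncard) :
    HasRainbowHamPath G (2 * n) n ∨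
      (Even n ∧ AllTwoCompleteBip G (2 * n) n X Y) := by
  classical
  rcases Nat.eq_zero_or_pos n with hn0 | hn
  · right
    subst hn0
    have hXe : X = ∅ := Finset.card_eq_zero.mp hX
    have hYe : Y = ∅ := Finset.card_eq_zero.mp hY
    refine ⟨Even.zero, ∅, ∅, ∅, ∅, Finset.disjoint_empty_left _, Finset.disjoint_empty_left _,
      by simp [hXe], by simp [hYe], by simp, by simp, by simp, by simp, ?_⟩
    intro i hi1 hi2 a b
    rcases hcov a with h | h
    · rw [hXe] at h; exact absurd h (Finset.notMem_empty a)
    · rw [hYe] at h; exact absurd h (Finset.notMem_empty a)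
  · set P : ℕ → Prop := fun len => ∃ (v : ℕ → V) (φ : ℕ → ℕ), IsRainbowPath G (2*n) len v φ
      with hP
    haveI : DecidablePred P := Classical.decPred _
    -- a 1-edge rainbow path exists
    obtain ⟨x0, hx0⟩ : X.Nonempty := Finset.card_pos.mp (by omega)
    have hne : ∃ b, (G 1).Adj x0 b := by
      by_contra hcon
      push_neg at hcon
      have : (G 1).neighborSet x0 = ∅ := Set.eq_empty_iff_forall_notMem.mpr hcon
      have h0 := hdeg 1 le_rfl (by omega) x0
      rw [this, Set.ncard_empty] at h0
      omega
    obtain ⟨b0, hb0⟩ := hne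
    have hP1 : P 1 := by
      refine ⟨fun i => if i = 0 then x0 else b0, fun _ => 1, ?_, ?_, ?_, ?_⟩
      · intro i hi j hj hij
        simp only [Set.mem_Iic] at hi hj
        by_cases hi' : i = 0 <;> by_cases hj' : j = 0
        · omega
        · simp only [if_pos hi', if_neg hj'] at hij
          exact absurd hij hb0.ne
        · simp only [if_neg hi', if_pos hj'] at hij
          exact absurd hij.symm hb0.ne
        · omega
      · intro i hi j hj _
        simp only [Set.mem_Iio] at hi hj
        omega
      · intro i hi
        exact ⟨le_rfl, by show (1:ℕ) ≤ 2*n; omega⟩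
      · intro i hi
        have hi0 : i = 0 := by omega
        subst hi0
        simpa using hb0
    set k := Nat.findGreatest P (2*n) with hk
    have hkub : ∀ len, P len → len ≤ k := by
      intro len hlen
      refine Nat.le_findGreatest ?_ hlen
      obtain ⟨v, φ, h⟩ := hlen
      exact rp_labels_le h
    have hPk : P k := Nat.findGreatest_spec (m := 1) (by omega) hP1
    obtain ⟨v, φ, hpk⟩ := hPk
    have hmax : ∀ (len' : ℕ) (v' : ℕ → V) (φ' : ℕ → ℕ),
        IsRainbowPath G (2*n) len' v' φ' → len' ≤ k := fun l a b h => hkub l ⟨a, b, h⟩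
    by_cases hbig : 2*n - 1 ≤ k
    · left
      have hp' := rp_mono hpk hbig
      refine ⟨v, φ, hp', ?_⟩
      have hinj : Set.InjOn v ↑(range (2*n)) := by
        intro a ha b hb hab
        simp only [Finset.coe_range, Set.mem_Iio] at ha hb
        exact hp'.1 (show a ∈ Set.Iic (2*n-1) by simp [Set.mem_Iic]; omega)
          (show b ∈ Set.Iic (2*n-1) by simp [Set.mem_Iic]; omega) hab
      have himg : (range (2*n)).image v = X ∪ Y := by
        apply Finset.eq_of_subset_of_card_le
        · intro a ha
          obtain ⟨i, -, rfl⟩ := Finset.mem_image.mp ha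
          rcases hcov (v i) with h | h
          · exact Finset.mem_union_left _ h
          · exact Finset.mem_union_right _ h
        · rw [Finset.card_union_of_disjoint hdisj, hX, hY,
            Finset.card_image_of_injOn hinj, Finset.card_range]
          omega
      intro u
      have hu : u ∈ (range (2*n)).image v := by
        rw [himg]
        rcases hcov u with h | h
        · exact Finset.mem_union_left _ h
        · exact Finset.mem_union_right _ h
      obtain ⟨i, hi, he⟩ := Finset.mem_image.mp hu
      exact ⟨i, by simp only [Finset.mem_range] at hi; omega, he⟩
    · have hk2 : k ≤ 2*n - 2 := by omega
      by_cases hcyc : ∃ (w : ℕ → V) (ψ : ℕ → ℕ), IsRainbowCycle G (2*n) (k+1) w ψ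
      · right
        obtain ⟨w, ψ, hcy⟩ := hcyc
        obtain ⟨hEn, hkn, hXA, hYA, hstruct⟩ :=
          cycleStructure hdisj hcov hX hY hbip hdeg (m := k+1) (by omega) (by omega)
            (fun l a b h => by have := hmax l a b h; omega) hcy
        set A := (range (k+1)).image w with hA
        have hn2 : n % 2 = 0 := Nat.even_iff.mp hEn
        have hnge2 : 2 ≤ n := by omega
        -- fresh labels of the first cycle
        have hLsub : (range (k+1)).image ψ ⊆ Finset.Icc 1 (2*n) := by
          intro c hcm
          simp only [Finset.mem_image, Finset.mem_range] at hcm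
          obtain ⟨i, hi, rfl⟩ := hcm
          exact Finset.mem_Icc.mpr (hcy.2.2.2.1 i hi)
        have hLcard : ((range (k+1)).image ψ).card = k+1 := by
          rw [Finset.card_image_of_injOn (by simpa using hcy.2.2.1), Finset.card_range]
        set U := Finset.Icc 1 (2*n) \ (range (k+1)).image ψ with hU
        have hUcard : U.card = n := by
          rw [hU, Finset.card_sdiff_of_subset hLsub, hLcard, Nat.card_Icc]
          omega
        have hUfresh : ∀ c ∈ U, (1 ≤ c ∧ c ≤ 2*n) ∧ ∀ i < k+1, ψ i ≠ c := by
          intro c hcU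
          rw [hU, Finset.mem_sdiff, Finset.mem_Icc] at hcU
          refine ⟨hcU.1, fun i hi he => hcU.2 (Finset.mem_image.mpr ⟨i, Finset.mem_range.mpr hi, he⟩)⟩
        have hadjU : ∀ c ∈ U, ∀ x ∈ X ∩ A, ∀ y ∈ Y ∩ A, (G c).Adj x y := by
          intro c hcU x hx y hy
          obtain ⟨⟨hc1, hc2⟩, hfr⟩ := hUfresh c hcU
          exact (hstruct c hc1 hc2 hfr x y).mpr (Or.inl ⟨hx, hy⟩)
        obtain ⟨w', ψ', hcy', himg', hlab'⟩ :=
          buildCycle (G := G) (s := 2*n) (m' := n/2) (by omega) (X ∩ A) (Y ∩ A) U hXA hYA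
            (by rw [hUcard]; omega)
            (fun c hc => (hUfresh c hc).1)
            (by
              intro a ha hay
              exact ((side_iff hdisj hcov a).mp (Finset.mem_inter.mp ha).1)
                (Finset.mem_inter.mp hay).1)
            hadjU
        obtain ⟨-, -, -, -, hstruct2⟩ :=
          cycleStructure hdisj hcov hX hY hbip hdeg (m := 2*(n/2)) (by omega) (by omega)
            (fun l a b h => by have := hmax l a b h; omega) hcy'
        have hA'A : (range (2*(n/2))).image w' = A := by
          rw [himg']
          ext a
          simp only [Finset.mem_union, Finset.mem_inter]
          constructor
          · rintro (⟨-, h⟩ | ⟨-, h⟩) <;> exact h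
          · intro h
            rcases hcov a with h' | h'
            · exact Or.inl ⟨h', h⟩
            · exact Or.inr ⟨h', h⟩
        rw [hA'A] at hstruct2
        have hXcards := Finset.card_inter_add_card_sdiff X A
        have hYcards := Finset.card_inter_add_card_sdiff Y A
        refine ⟨hEn, X ∩ A, X \ A, Y ∩ A, Y \ A, ?_, ?_, ?_, ?_, hXA, by omega, hYA, by omega, ?_⟩
        · exact Finset.disjoint_left.mpr
            (fun a ha hb => (Finset.mem_sdiff.mp hb).2 (Finset.mem_inter.mp ha).2)
        · exact Finset.disjoint_left.mpr
            (fun a ha hb => (Finset.mem_sdiff.mp hb).2 (Finset.mem_inter.mp ha).2)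
        · ext a
          simp only [Finset.mem_union, Finset.mem_inter, Finset.mem_sdiff]
          tauto
        · ext a
          simp only [Finset.mem_union, Finset.mem_inter, Finset.mem_sdiff]
          tauto
        · intro i hi1 hi2 a b
          by_cases hiU : ∀ t < k+1, ψ t ≠ i
          · exact hstruct i hi1 hi2 hiU a b
          · push_neg at hiU
            obtain ⟨t, ht, hte⟩ := hiU
            have hfr2 : ∀ t' < 2*(n/2), ψ' t' ≠ i := by
              intro t' ht' he
              have := hlab' t' ht'
              rw [he, hU, Finset.mem_sdiff] at this
              exact this.2 (Finset.mem_image.mpr ⟨t, Finset.mem_range.mpr ht, hte⟩)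
            exact hstruct2 i hi1 hi2 hfr2 a b
      · exfalso
        push_neg at hcyc
        rcases hcov (v k) with hvk | hvk
        · exact noCycleCase hdisj hcov hX hY hbip hdeg hn hk2 hpk hvk hmax hcyc
        · exact noCycleCase hdisj.symm (fun a => (hcov a).symm) hY hX
            (fun i hi1 hi2 a b h => (hbip i hi1 hi2 a b h).symm) hdeg hn hk2 hpk hvk hmax hcyc
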